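/- For every integer n ≥ 2, the set A_n = {0^{2i}1 : 1 ≤ i ≤ n} ⊆ 2^{<ℕ} (where 0^{2i}1 is the sequence of 2i zeros followed by a one) has cardinality n, and every strong subtree S of 2^{<ℕ} containing A_n has height at least 2n − 1. -/

import Mathlib

/-- Strict prefix relation on lists: the tree order on `b^{<ℕ}`. -/
def PLt {β : Type*} (s t : List β) : Prop := s <+: t ∧ s ≠ t

/-- The level of a node `t` in the tree `T ⊆ b^{<ℕ}`: the number of its strict
predecessors (strict prefixes) lying in `T`. -/
noncomputable def lvl {β : Type*} (T : Set (List β)) (t : List β) : ℕ :=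
  {s ∈ T | PLt s t}.ncard

/-- `t` is an immediate successor of `s` in the tree `T`. -/
def ImmSuc {β : Type*} (T : Set (List β)) (s t : List β) : Prop :=
  s ∈ T ∧ t ∈ T ∧ PLt s t ∧ ¬∃ u ∈ T, PLt s u ∧ PLt u t

/-- `T` is uniquely rooted: it has a node below all of its nodes. -/
def UniquelyRooted {β : Type*} (T : Set (List β)) : Prop :=
  ∃ r ∈ T, ∀ t ∈ T, r <+: t

/-- `C` is a maximal chain of the tree `T`. -/
def MaxChainIn {β : Type*} (T C : Set (List β)) : Prop :=
  C ⊆ T ∧ (∀ s ∈ C, ∀ t ∈ C, s <+: t ∨ t <+: s) ∧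
    ∀ C', C ⊆ C' → C' ⊆ T → (∀ s ∈ C', ∀ t ∈ C', s <+: t ∨ t <+: s) → C' = C

/-- `T` is balanced with all maximal chains of cardinality `h`
(i.e. balanced and of height `h`). -/
def BalancedOfHeight {β : Type*} (T : Set (List β)) (h : ℕ) : Prop :=
  ∀ C, MaxChainIn T C → C.Finite ∧ C.ncard = h

/-- Every level of `S` is a subset of some level of `T`. -/
def LevelsAligned {β : Type*} (T S : Set (List β)) : Prop :=
  ∀ s ∈ S, ∀ s' ∈ S, lvl S s = lvl S s' → lvl T s = lvl T s'

/-- For every non-maximal node `s` of `S` and every immediate successor `t` of `s`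
in `T` there is a unique immediate successor `s'` of `s` in `S` with `t ≤ s'`. -/
def SuccCond {β : Type*} (T S : Set (List β)) : Prop :=
  ∀ s ∈ S, (∃ x ∈ S, PLt s x) → ∀ t, ImmSuc T s t → ∃! s', ImmSuc S s s' ∧ t <+: s'

/-- `S` is a strong subtree of `T` of (finite) height `h`. -/
def IsStrongSubtreeFin {β : Type*} (T S : Set (List β)) (h : ℕ) : Prop :=
  S ⊆ T ∧ S.Nonempty ∧ UniquelyRooted S ∧ BalancedOfHeight S h ∧
    LevelsAligned T S ∧ SuccCond T S

/-- `S` is a strong subtree of `T` of infinite height (uniquely rooted, balanced with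
all maximal chains infinite, levels of `S` inside levels of `T`, successor condition). -/
def IsStrongSubtreeInf {β : Type*} (T S : Set (List β)) : Prop :=
  S ⊆ T ∧ S.Nonempty ∧ UniquelyRooted S ∧ (∀ s ∈ S, ∃ x ∈ S, PLt s x) ∧
    LevelsAligned T S ∧ SuccCond T S

/-- `r` is the root of `S`. -/
def IsRoot {β : Type*} (S : Set (List β)) (r : List β) : Prop :=
  r ∈ S ∧ ∀ x ∈ S, r <+: x

/-- `v` is the immediate successor of `u` in `S` in direction `p`, i.e. the unique
immediate successor of `u` in `S` extending `u⌢p`. -/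
def DirSucc {β : Type*} (S : Set (List β)) (u : List β) (p : β) (v : List β) : Prop :=
  ImmSuc S u v ∧ (u ++ [p]) <+: v

namespace Stmt10Aux

open List
variable {β : Type*}

lemma plt_length {s t : List β} (h : PLt s t) : s.length < t.length :=
  lt_of_le_of_ne h.1.length_le fun he => h.2 (h.1.eq_of_length he)

lemma prefixes_finite (t : List β) : {w : List β | w <+: t}.Finite := by
  apply Set.Finite.subset ((Set.finite_Iic t.length).image (fun k => t.take k))
  intro w hw
  exact ⟨w.length, hw.length_le, (List.prefix_iff_eq_take.mp hw).symm⟩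

lemma lvl_univ (t : List β) : lvl Set.univ t = t.length := by
  have hset : {s ∈ (Set.univ : Set (List β)) | PLt s t}
      = (fun k => t.take k) '' Set.Iio t.length := by
    ext s
    simp only [Set.mem_setOf_eq, Set.mem_image, Set.mem_Iio, Set.mem_univ, true_and]
    constructor
    · rintro ⟨h1, h2⟩
      exact ⟨s.length, lt_of_le_of_ne h1.length_le fun he => h2 (h1.eq_of_length he),
        (List.prefix_iff_eq_take.mp h1).symm⟩
    · rintro ⟨k, hk, rfl⟩
      refine ⟨List.take_prefix k t, fun he => ?_⟩
      have := congrArg List.length he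
      simp [List.length_take] at this
      omega
  have hinj : Set.InjOn (fun k => t.take k) (Set.Iio t.length) := by
    intro a ha b hb he
    have := congrArg List.length he
    simp only [Set.mem_Iio] at ha hb
    simp [List.length_take] at this
    omega
  rw [lvl, hset, Set.ncard_image_of_injOn hinj, ← Finset.coe_range,
    Set.ncard_coe_finset, Finset.card_range]

lemma lvl_lt_height {S : Set (List β)} {h : ℕ} (hb : BalancedOfHeight S h)
    {s : List β} (hs : s ∈ S) : lvl S s < h := by
  classical
  set P : Set (List β) := {w ∈ S | PLt w s} with hPdef
  have hPfin : P.Finite := (prefixes_finite s).subset (fun w hw => hw.2.1)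
  set C₀ : Set (List β) := insert s P with hC₀def
  set F : Set (Set (List β)) :=
    {C | C ⊆ S ∧ ∀ a ∈ C, ∀ b ∈ C, a <+: b ∨ b <+: a} with hFdef
  have hC₀F : C₀ ∈ F := by
    constructor
    · rintro w hw
      rcases hw with rfl | hw
      · exact hs
      · exact hw.1
    · intro a ha b hb
      have hpa : a <+: s := by
        rcases ha with rfl | ha
        · exact List.prefix_refl _
        · exact ha.2.1
      have hpb : b <+: s := by
        rcases hb with rfl | hb
        · exact List.prefix_refl _
        · exact hb.2.1
      exact List.prefix_or_prefix_of_prefix hpa hpb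
  have hzorn : ∃ m, C₀ ⊆ m ∧ Maximal (fun x => x ∈ F) m := by
    apply zorn_subset_nonempty F ?_ C₀ hC₀F
    intro c hcF hchain hcne
    refine ⟨⋃₀ c, ⟨?_, ?_⟩, fun C hC => Set.subset_sUnion_of_mem hC⟩
    · intro w hw
      obtain ⟨C, hCc, hwC⟩ := hw
      exact (hcF hCc).1 hwC
    · intro a ha b hb
      obtain ⟨Ca, hCa, haC⟩ := ha
      obtain ⟨Cb, hCb, hbC⟩ := hb
      rcases hchain.total hCa hCb with hsub | hsub
      · exact (hcF hCb).2 a (hsub haC) b hbC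
      · exact (hcF hCa).2 a haC b (hsub hbC)
  obtain ⟨m, hC₀m, hmF, hmax⟩ := hzorn
  have hmchain : MaxChainIn S m := by
    refine ⟨hmF.1, hmF.2, fun C' hmC' hC'S hC'chain => ?_⟩
    exact Set.Subset.antisymm (hmax ⟨hC'S, hC'chain⟩ hmC') hmC'
  obtain ⟨hmfin, hmcard⟩ := hb m hmchain
  have hsP : s ∉ P := fun hsP => hsP.2.2 rfl
  have hC₀card : C₀.ncard = P.ncard + 1 := Set.ncard_insert_of_notMem hsP hPfin
  have : C₀.ncard ≤ m.ncard := Set.ncard_le_ncard hC₀m hmfin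
  have hlvl : lvl S s = P.ncard := rfl
  omega

lemma meet_mem {S : Set (List β)} (hroot : UniquelyRooted S) (hsucc : SuccCond Set.univ S)
    {s t m : List β} (hs : s ∈ S) (ht : t ∈ S) (hms : PLt m s) (hmt : PLt m t)
    (hmeet : ∀ w, w <+: s → w <+: t → w <+: m) : m ∈ S := by
  classical
  by_contra hmS
  obtain ⟨r, hrS, hr⟩ := hroot
  have hrm : r <+: m := hmeet r (hr s hs) (hr t ht)
  set P : Set (List β) := {w ∈ S | w <+: m} with hPdef
  have hPne : P.Nonempty := ⟨r, hrS, hrm⟩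
  have hPfin : P.Finite := (prefixes_finite m).subset (fun w hw => hw.2)
  obtain ⟨u, huP, humax⟩ := Set.Finite.exists_maximalFor List.length P hPfin hPne
  obtain ⟨huS, hum⟩ := huP
  have hune : u ≠ m := fun he => hmS (he ▸ huS)
  have hulen : u.length < m.length := plt_length ⟨hum, hune⟩
  set t₀ : List β := m.take (u.length + 1) with ht₀def
  have ht₀m : t₀ <+: m := List.take_prefix _ _
  have ht₀len : t₀.length = u.length + 1 := by
    simp [ht₀def, List.length_take]; omega
  have hut₀ : u <+: t₀ := by
    rw [List.prefix_iff_eq_take] at hum ⊢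
    rw [ht₀def, List.take_take]
    rw [min_eq_left (by omega)]
    exact hum
  have hplt_ut₀ : PLt u t₀ := ⟨hut₀, fun he => by rw [he] at ht₀len; omega⟩
  have himm : ImmSuc Set.univ u t₀ := by
    refine ⟨trivial, trivial, hplt_ut₀, ?_⟩
    rintro ⟨w, -, hw1, hw2⟩
    have h1 := plt_length hw1
    have h2 := plt_length hw2
    omega
  have hplt_um : PLt u m := ⟨hum, hune⟩
  have hplt_us : PLt u s := ⟨hum.trans hms.1, fun he => by
    subst he; have := plt_length hms; omega⟩
  have hplt_ut : PLt u t := ⟨hum.trans hmt.1, fun he => by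
    subst he; have := plt_length hmt; omega⟩
  have huniq := hsucc u huS ⟨s, hs, hplt_us⟩ t₀ himm
  -- minimal element of S strictly above u below a given x
  have key : ∀ x ∈ S, PLt u x → t₀ <+: x →
      ∃ x₁, (ImmSuc S u x₁ ∧ t₀ <+: x₁) ∧ x₁ <+: x := by
    intro x hxS hux ht₀x
    set Q : Set (List β) := {w ∈ S | PLt u w ∧ w <+: x} with hQdef
    have hQne : Q.Nonempty := ⟨x, hxS, hux, List.prefix_refl _⟩
    have hQfin : Q.Finite := (prefixes_finite x).subset (fun w hw => hw.2.2)
    obtain ⟨x₁, hx₁Q, hmin⟩ := Set.Finite.exists_minimalFor List.length Q hQfin hQne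
    obtain ⟨hx₁S, hux₁, hx₁x⟩ := hx₁Q
    have himm₁ : ImmSuc S u x₁ := by
      refine ⟨huS, hx₁S, hux₁, ?_⟩
      rintro ⟨w, hwS, hw1, hw2⟩
      have hwQ : w ∈ Q := ⟨hwS, hw1, hw2.1.trans hx₁x⟩
      have := hmin (j := w) hwQ (le_of_lt (plt_length hw2))
      have := plt_length hw2
      omega
    have ht₀x₁ : t₀ <+: x₁ := by
      apply List.prefix_of_prefix_length_le ht₀x hx₁x
      have := plt_length hux₁
      omega
    exact ⟨x₁, ⟨himm₁, ht₀x₁⟩, hx₁x⟩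
  obtain ⟨s₁, hs₁, hs₁s⟩ := key s hs hplt_us (ht₀m.trans hms.1)
  obtain ⟨t₁, ht₁, ht₁t⟩ := key t ht hplt_ut (ht₀m.trans hmt.1)
  have heq : s₁ = t₁ := huniq.unique hs₁ ht₁
  have hs₁m : s₁ <+: m := hmeet s₁ hs₁s (heq ▸ ht₁t)
  have : s₁.length ≤ u.length :=
    humax (j := s₁) ⟨hs₁.1.2.1, hs₁m⟩ (le_of_lt (plt_length hs₁.1.2.2.1))
  have := plt_length hs₁.1.2.2.1
  omega

end Stmt10Aux

theorem stmt10 (n : ℕ) (hn : 2 ≤ n) :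
    ((fun i : ℕ => List.replicate (2 * i) (0 : Fin 2) ++ [(1 : Fin 2)]) ''
        Set.Icc 1 n).ncard = n ∧
      ∀ (S : Set (List (Fin 2))) (h : ℕ), IsStrongSubtreeFin Set.univ S h →
        ((fun i : ℕ => List.replicate (2 * i) (0 : Fin 2) ++ [(1 : Fin 2)]) ''
            Set.Icc 1 n) ⊆ S →
        2 * n - 1 ≤ h := by
  classical
  constructor
  · have hinj : Set.InjOn
        (fun i : ℕ => List.replicate (2 * i) (0 : Fin 2) ++ [(1 : Fin 2)]) (Set.Icc 1 n) := by
      intro a _ b _ he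
      have := congrArg List.length he
      simp only [List.length_append, List.length_replicate, List.length_singleton] at this
      omega
    rw [Set.ncard_image_of_injOn hinj, ← Finset.coe_Icc, Set.ncard_coe_finset, Nat.card_Icc]
    omega
  · intro S h hS hsub
    obtain ⟨hSsub, hSne, hroot, hbal, halign, hsucc⟩ := hS
    have haS : ∀ i, 1 ≤ i → i ≤ n →
        List.replicate (2 * i) (0 : Fin 2) ++ [(1 : Fin 2)] ∈ S := by
      intro i h1 h2
      exact hsub ⟨i, ⟨h1, h2⟩, rfl⟩
    have hmS : ∀ i, 1 ≤ i → i ≤ n - 1 → List.replicate (2 * i) (0 : Fin 2) ∈ S := by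
      intro i h1 h2
      apply Stmt10Aux.meet_mem hroot hsucc (haS i h1 (by omega)) (haS n (by omega) le_rfl)
      · refine ⟨⟨[(1 : Fin 2)], rfl⟩, fun he => ?_⟩
        have := congrArg List.length he
        simp only [List.length_append, List.length_replicate, List.length_singleton] at this
        omega
      · refine ⟨⟨List.replicate (2 * n - 2 * i) (0 : Fin 2) ++ [(1 : Fin 2)], ?_⟩, fun he => ?_⟩
        · rw [← List.append_assoc, ← List.replicate_add]
          congr 2
          omega
        · have := congrArg List.length he
          simp only [List.length_append, List.length_replicate, List.length_singleton] at this
          omega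
      · intro w hw1 hw2
        have hwlen : w.length ≤ 2 * i + 1 := by
          have := hw1.length_le
          simp only [List.length_append, List.length_replicate, List.length_singleton] at this
          omega
        rcases Nat.lt_or_ge w.length (2 * i + 1) with hlt | hge
        · apply List.prefix_of_prefix_length_le hw1 ⟨[(1 : Fin 2)], rfl⟩
          simp only [List.length_replicate]
          omega
        · exfalso
          have hweq : w = List.replicate (2 * i) (0 : Fin 2) ++ [(1 : Fin 2)] :=
            hw1.eq_of_length (by
              simp only [List.length_append, List.length_replicate, List.length_singleton]
              omega)
          have hpre : List.replicate (2 * i) (0 : Fin 2) ++ [(1 : Fin 2)]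
              <+: List.replicate (2 * n) (0 : Fin 2) := by
            apply List.prefix_of_prefix_length_le (hweq ▸ hw2) ⟨[(1 : Fin 2)], rfl⟩
            simp only [List.length_append, List.length_replicate, List.length_singleton]
            omega
          have h1 : (1 : Fin 2) ∈ List.replicate (2 * n) (0 : Fin 2) :=
            hpre.sublist.subset (by simp)
          exact absurd (List.eq_of_mem_replicate h1) (by decide)
    set g : ℕ → List (Fin 2) := fun k => if k % 2 = 0 then List.replicate k (0 : Fin 2)
      else List.replicate (k - 1) (0 : Fin 2) ++ [(1 : Fin 2)] with hg
    set D : Finset ℕ := insert (2 * n + 1) (Finset.Icc 2 (2 * n - 1)) with hD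
    have hgS : ∀ k ∈ D, g k ∈ S := by
      intro k hk
      simp only [hD, Finset.mem_insert, Finset.mem_Icc] at hk
      rcases Nat.even_or_odd k with ⟨j, hj⟩ | ⟨j, hj⟩
      · have hk2 : k % 2 = 0 := by omega
        have hgk : g k = List.replicate (2 * j) (0 : Fin 2) := by
          simp only [hg]
          rw [if_pos hk2]
          congr 1
          omega
        rw [hgk]
        exact hmS j (by omega) (by omega)
      · have hk2 : ¬ k % 2 = 0 := by omega
        have hgk : g k = List.replicate (2 * j) (0 : Fin 2) ++ [(1 : Fin 2)] := by
          simp only [hg]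
          rw [if_neg hk2]
          congr 2
          omega
        rw [hgk]
        exact haS j (by omega) (by omega)
    have hglen : ∀ k ∈ D, (g k).length = k := by
      intro k hk
      simp only [hD, Finset.mem_insert, Finset.mem_Icc] at hk
      by_cases h2 : k % 2 = 0
      · simp [hg, h2]
      · simp only [hg, if_neg h2, List.length_append, List.length_replicate,
          List.length_singleton]
        omega
    have hmap : ∀ k ∈ D, lvl S (g k) ∈ Finset.range h := by
      intro k hk
      simpa using Stmt10Aux.lvl_lt_height hbal (hgS k hk)
    have hinj2 : Set.InjOn (fun k => lvl S (g k)) ↑D := by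
      intro a ha b hb he
      have h1 := halign (g a) (hgS a (Finset.mem_coe.mp ha)) (g b)
        (hgS b (Finset.mem_coe.mp hb)) he
      rw [Stmt10Aux.lvl_univ, Stmt10Aux.lvl_univ] at h1
      have h2 := hglen a (Finset.mem_coe.mp ha)
      have h3 := hglen b (Finset.mem_coe.mp hb)
      omega
    have hcard := Finset.card_le_card_of_injOn (fun k => lvl S (g k)) hmap hinj2
    have hDcard : D.card = 2 * n - 1 := by
      rw [hD, Finset.card_insert_of_notMem (by simp only [Finset.mem_Icc]; omega),
        Nat.card_Icc]
      omega
    rw [Finset.card_range] at hcard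
    omega
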